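/- Let 0 < a < b < ∞ and let p ∈ C[0,∞) ∩ C¹(0,∞) with p(0)=0, p'(ρ) > 0 on (0,∞). Define H(ρ) = ρ ∫_1^ρ p(z)/z² dz and E(ρ|r) = H(ρ) − H'(r)(ρ−r) − H(r). Then there exists c = c(a,b) > 0 such that for all ρ ∈ [0,∞) with ρ ∉ [a/2, 2b] and all r ∈ [a,b], one has E(ρ|r) ≥ c·(1 + ρ). -/

import Mathlib

/-- Residual lower bound for the relative energy (Lemma 7.2, residual part):
`E(ρ|r) ≥ c(a,b)·(1+ρ)` for `ρ ∈ [0,∞) \ [a/2, 2b]` and `r ∈ [a,b]`. -/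
theorem relative_energy_residual_lower_bound
    (a b : ℝ) (ha : 0 < a) (hab : a < b)
    (p p' H : ℝ → ℝ) (E : ℝ → ℝ → ℝ)
    (hp_cont : ContinuousOn p (Set.Ici (0:ℝ)))
    (hp0 : p 0 = 0)
    (hp_deriv : ∀ x ∈ Set.Ioi (0:ℝ), HasDerivAt p (p' x) x)
    (hp'_cont : ContinuousOn p' (Set.Ioi (0:ℝ)))
    (hp'_pos : ∀ x ∈ Set.Ioi (0:ℝ), 0 < p' x)
    (hH : ∀ ρ : ℝ, H ρ = ρ * ∫ z in (1:ℝ)..ρ, p z / z ^ 2)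
    (hE : ∀ ρ r : ℝ, E ρ r = H ρ - deriv H r * (ρ - r) - H r) :
    ∃ c > (0:ℝ), ∀ ρ : ℝ, 0 ≤ ρ → ρ ∉ Set.Icc (a/2) (2*b) →
      ∀ r ∈ Set.Icc a b, c * (1 + ρ) ≤ E ρ r := by
  have hb : 0 < b := ha.trans hab
  set f : ℝ → ℝ := fun z => p z / z ^ 2 with hfdef
  set F : ℝ → ℝ := fun ρ => ∫ z in (1:ℝ)..ρ, f z with hFdef
  set G : ℝ → ℝ := fun ρ => F ρ + p ρ / ρ with hGdef
  -- continuity of f on Ioi 0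
  have hpIoi : ContinuousOn p (Set.Ioi (0:ℝ)) :=
    hp_cont.mono (Set.Ioi_subset_Ici le_rfl)
  have hf_cont : ContinuousOn f (Set.Ioi (0:ℝ)) := by
    apply hpIoi.div (continuousOn_pow 2)
    intro x hx
    exact pow_ne_zero 2 (ne_of_gt hx)
  have hf_int : ∀ ρ : ℝ, 0 < ρ → IntervalIntegrable f MeasureTheory.volume 1 ρ := by
    intro ρ hρ
    apply (hf_cont.mono ?_).intervalIntegrable
    intro x hx
    rcases hx with ⟨h1, _⟩
    have : (0:ℝ) < min 1 ρ := lt_min one_pos hρ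
    exact lt_of_lt_of_le this h1
  have hF_deriv : ∀ ρ : ℝ, 0 < ρ → HasDerivAt F (f ρ) ρ := by
    intro ρ hρ
    exact intervalIntegral.integral_hasDerivAt_right (hf_int ρ hρ)
      (hf_cont.stronglyMeasurableAtFilter isOpen_Ioi ρ hρ)
      (hf_cont.continuousAt (isOpen_Ioi.mem_nhds hρ))
  -- H has derivative G on Ioi 0
  have hHF : ∀ ρ : ℝ, H ρ = ρ * F ρ := fun ρ => hH ρ
  have hH_deriv : ∀ ρ : ℝ, 0 < ρ → HasDerivAt H (G ρ) ρ := by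
    intro ρ hρ
    have h1 : HasDerivAt (fun x => x * F x) (1 * F ρ + ρ * f ρ) ρ :=
      (hasDerivAt_id ρ).mul (hF_deriv ρ hρ)
    have h2 : (1:ℝ) * F ρ + ρ * f ρ = G ρ := by
      simp only [hGdef, hfdef, one_mul]
      field_simp
    rw [h2] at h1
    exact h1.congr_of_eventuallyEq (Filter.Eventually.of_forall hHF)
  -- G has derivative p'/ρ on Ioi 0, hence strictly monotone
  have hG_deriv : ∀ ρ : ℝ, 0 < ρ → HasDerivAt G (p' ρ / ρ) ρ := by
    intro ρ hρ
    have h1 : HasDerivAt (fun x => p x / x) ((p' ρ * ρ - p ρ * 1) / ρ ^ 2) ρ :=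
      (hp_deriv ρ hρ).div (hasDerivAt_id ρ) (ne_of_gt hρ)
    have h2 : HasDerivAt G (f ρ + (p' ρ * ρ - p ρ * 1) / ρ ^ 2) ρ :=
      (hF_deriv ρ hρ).add h1
    have h3 : f ρ + (p' ρ * ρ - p ρ * 1) / ρ ^ 2 = p' ρ / ρ := by
      simp only [hfdef, mul_one]
      field_simp
      ring
    rwa [h3] at h2
  have hG_contOn : ContinuousOn G (Set.Ioi (0:ℝ)) := fun x hx =>
    ((hG_deriv x hx).differentiableAt.continuousAt).continuousWithinAt
  have hG_mono : StrictMonoOn G (Set.Ioi (0:ℝ)) := by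
    apply strictMonoOn_of_deriv_pos (convex_Ioi 0) hG_contOn
    intro x hx
    rw [interior_Ioi] at hx
    rw [(hG_deriv x hx).deriv]
    exact div_pos (hp'_pos x hx) hx
  have hH_contOn : ContinuousOn H (Set.Ioi (0:ℝ)) := fun x hx =>
    ((hH_deriv x hx).differentiableAt.continuousAt).continuousWithinAt
  -- deriv H = G on Ioi 0
  have hderivH : ∀ r : ℝ, 0 < r → deriv H r = G r := fun r hr => (hH_deriv r hr).deriv
  -- the Bregman function φ s ρ = H ρ - G s (ρ - s) - H s
  set φ : ℝ → ℝ → ℝ := fun s t => H t - G s * (t - s) - H s with hφdef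
  have hφ_deriv : ∀ s t : ℝ, 0 < t → HasDerivAt (φ s) (G t - G s) t := by
    intro s t ht
    have h1 : HasDerivAt (fun x => H x - G s * (x - s) - H s) (G t - G s * 1) t :=
      ((hH_deriv t ht).sub (((hasDerivAt_id t).sub_const s).const_mul (G s))).sub_const (H s)
    rw [mul_one] at h1
    exact h1
  have hφ_contOn : ∀ s : ℝ, ContinuousOn (φ s) (Set.Ioi (0:ℝ)) := fun s x hx =>
    ((hφ_deriv s x hx).differentiableAt.continuousAt).continuousWithinAt
  have hφ_self : ∀ s : ℝ, φ s s = 0 := by intro s; simp [hφdef]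
  -- φ s is strictly antitone on [x, s] for 0 < x
  have hanti : ∀ s : ℝ, 0 < s → ∀ x : ℝ, 0 < x → StrictAntiOn (φ s) (Set.Icc x s) := by
    intro s hs x hx
    rcases le_or_gt s x with h | h
    · intro u hu v hv huv
      have := hu.1.trans hu.2
      have := hv.1.trans hv.2
      nlinarith [hu.1, hu.2, hv.1, hv.2]
    apply strictAntiOn_of_deriv_neg (convex_Icc x s)
    · exact (hφ_contOn s).mono (fun t ht => lt_of_lt_of_le hx ht.1)
    · intro t ht
      rw [interior_Icc] at ht
      have ht0 : 0 < t := hx.trans ht.1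
      rw [(hφ_deriv s t ht0).deriv]
      have : G t < G s := hG_mono ht0 hs ht.2
      linarith
  -- φ s is strictly monotone on [s, y] for 0 < s
  have hmono : ∀ s : ℝ, 0 < s → ∀ y : ℝ, StrictMonoOn (φ s) (Set.Icc s y) := by
    intro s hs y
    apply strictMonoOn_of_deriv_pos (convex_Icc s y)
    · exact (hφ_contOn s).mono (fun t ht => lt_of_lt_of_le hs ht.1)
    · intro t ht
      rw [interior_Icc] at ht
      have ht0 : 0 < t := hs.trans ht.1
      rw [(hφ_deriv s t ht0).deriv]
      have : G s < G t := hG_mono hs ht0 ht.1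
      linarith
  have ha2 : 0 < a / 2 := by linarith
  have h2b : (0:ℝ) < 2 * b := by linarith
  -- positivity of φ r (a/2) and φ r (2b) for r in [a,b]
  have hpos_small : ∀ r ∈ Set.Icc a b, 0 < φ r (a / 2) := by
    intro r hr
    have hr0 : 0 < r := lt_of_lt_of_le ha hr.1
    have ha2r : a / 2 < r := lt_of_lt_of_le (by linarith) hr.1
    have := hanti r hr0 (a/2) ha2
      (Set.mem_Icc.2 ⟨le_refl _, ha2r.le⟩) (Set.mem_Icc.2 ⟨ha2r.le, le_refl _⟩) ha2r
    rw [hφ_self] at this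
    exact this
  have hpos_big : ∀ r ∈ Set.Icc a b, 0 < φ r (2 * b) := by
    intro r hr
    have hr0 : 0 < r := lt_of_lt_of_le ha hr.1
    have hr2b : r < 2 * b := lt_of_le_of_lt hr.2 (by linarith)
    have := hmono r hr0 (2*b)
      (Set.mem_Icc.2 ⟨le_refl _, hr2b.le⟩) (Set.mem_Icc.2 ⟨hr2b.le, le_refl _⟩) hr2b
    rw [hφ_self] at this
    exact this
  -- compactness: minima over r ∈ [a,b]
  have hIcc_sub : Set.Icc a b ⊆ Set.Ioi (0:ℝ) := fun x hx => lt_of_lt_of_le ha hx.1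
  have hcont_in_r : ∀ t : ℝ, ContinuousOn (fun r => φ r t) (Set.Icc a b) := by
    intro t
    apply ContinuousOn.sub
    · apply ContinuousOn.sub continuousOn_const
      exact (hG_contOn.mono hIcc_sub).mul (continuousOn_const.sub continuousOn_id)
    · exact hH_contOn.mono hIcc_sub
  obtain ⟨r₁, hr₁, hmin₁⟩ := (isCompact_Icc (a := a) (b := b)).exists_isMinOn
    (Set.nonempty_Icc.2 hab.le) (hcont_in_r (2*b))
  obtain ⟨r₂, hr₂, hmin₂⟩ := (isCompact_Icc (a := a) (b := b)).exists_isMinOn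
    (Set.nonempty_Icc.2 hab.le) (hcont_in_r (a/2))
  set δ₁ : ℝ := φ r₁ (2*b) with hδ₁def
  set δ₂ : ℝ := φ r₂ (a/2) with hδ₂def
  have hδ₁ : 0 < δ₁ := hpos_big r₁ hr₁
  have hδ₂ : 0 < δ₂ := hpos_small r₂ hr₂
  set m : ℝ := G (2*b) - G b with hmdef
  have hm : 0 < m := by
    have := hG_mono (Set.mem_Ioi.2 hb) (Set.mem_Ioi.2 h2b) (by linarith)
    simp only [hmdef]; linarith
  -- p is strictly monotone on Ici 0
  have hp_mono : StrictMonoOn p (Set.Ici (0:ℝ)) := by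
    apply strictMonoOn_of_deriv_pos (convex_Ici 0) hp_cont
    intro x hx
    rw [interior_Ici] at hx
    rw [(hp_deriv x hx).deriv]
    exact hp'_pos x hx
  have hpa : 0 < p a := by
    have := hp_mono (Set.self_mem_Ici) (Set.mem_Ici.2 ha.le) ha
    rwa [hp0] at this
  -- the constant
  set c : ℝ := min (min (δ₁ / (1 + 2*b)) m) (min (δ₂ / (1 + a/2)) (p a)) with hcdef
  have hc : 0 < c := by
    apply lt_min (lt_min _ hm) (lt_min _ hpa)
    · exact div_pos hδ₁ (by linarith)
    · exact div_pos hδ₂ (by linarith)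
  refine ⟨c, hc, ?_⟩
  intro ρ hρ0 hρres r hr
  have hr0 : 0 < r := lt_of_lt_of_le ha hr.1
  have hEφ : E ρ r = φ r ρ := by
    rw [hE, hderivH r hr0]
  rw [hEφ]
  -- split into cases
  rw [Set.mem_Icc, not_and_or, not_le, not_le] at hρres
  rcases hρres with hsmall | hbig
  · -- ρ < a/2
    rcases eq_or_lt_of_le hρ0 with hz | hρ0'
    · -- ρ = 0 : φ r 0 = p r
      have hH0 : H 0 = 0 := by rw [hH]; ring
      have hφ0 : φ r 0 = p r := by
        have : H r = r * F r := hHF r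
        simp only [hφdef, hH0, hGdef]
        field_simp [this]
        linear_combination (-r) * this
      have hzz : ρ = 0 := hz.symm
      subst hzz
      rw [hφ0]
      have hpr : p a ≤ p r := by
        rcases eq_or_lt_of_le hr.1 with h | h
        · rw [h]
        · exact (hp_mono (Set.mem_Ici.2 ha.le) (Set.mem_Ici.2 hr0.le) h).le
      have hc1 : c ≤ p a := le_trans (min_le_right _ _) (min_le_right _ _)
      nlinarith
    · -- 0 < ρ < a/2 : φ r ρ ≥ φ r (a/2) ≥ δ₂
      have ha2r : a / 2 ≤ r := le_trans (by linarith) hr.1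
      have hstep : φ r (a/2) < φ r ρ :=
        hanti r hr0 ρ hρ0' (Set.mem_Icc.2 ⟨le_refl _, hsmall.le.trans ha2r⟩)
          (Set.mem_Icc.2 ⟨hsmall.le, ha2r⟩) hsmall
      have hδ : δ₂ ≤ φ r (a/2) := hmin₂ hr
      have hc2 : c ≤ δ₂ / (1 + a/2) := le_trans (min_le_right _ _) (min_le_left _ _)
      have h1 : c * (1 + ρ) ≤ c * (1 + a/2) := by nlinarith
      have h2 : c * (1 + a/2) ≤ δ₂ := by
        rw [le_div_iff₀ (by linarith : (0:ℝ) < 1 + a/2)] at hc2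
        linarith
      exact (h1.trans h2).trans (hδ.trans hstep.le)
  · -- ρ > 2b : linear growth
    -- ψ t = φ r t - m t is monotone on [2b, ρ]
    have hψmono : MonotoneOn (fun t => φ r t - m * t) (Set.Icc (2*b) ρ) := by
      apply monotoneOn_of_deriv_nonneg (convex_Icc _ _)
      · apply ContinuousOn.sub
        · exact (hφ_contOn r).mono (fun t ht => lt_of_lt_of_le h2b ht.1)
        · exact continuousOn_const.mul continuousOn_id
      · intro t ht
        rw [interior_Icc] at ht
        have ht0 : 0 < t := h2b.trans ht.1
        exact (((hφ_deriv r t ht0).sub ((hasDerivAt_id t).const_mul m)).differentiableAt).differentiableWithinAt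
      · intro t ht
        rw [interior_Icc] at ht
        have ht0 : 0 < t := h2b.trans ht.1
        have hd : HasDerivAt (fun t => φ r t - m * t) (G t - G r - m * 1) t :=
          (hφ_deriv r t ht0).sub ((hasDerivAt_id t).const_mul m)
        rw [hd.deriv]
        have h1 : G (2*b) < G t := hG_mono (Set.mem_Ioi.2 h2b) (Set.mem_Ioi.2 ht0) ht.1
        have h2 : G r ≤ G b := by
          rcases eq_or_lt_of_le hr.2 with h | h
          · rw [h]
          · exact (hG_mono (Set.mem_Ioi.2 hr0) (Set.mem_Ioi.2 hb) h).le
        simp only [hmdef]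
        linarith
    have hkey := hψmono (Set.mem_Icc.2 ⟨le_refl _, hbig.le⟩)
      (Set.mem_Icc.2 ⟨hbig.le, le_refl _⟩) hbig.le
    -- φ r ρ ≥ φ r (2b) + m (ρ - 2b) ≥ δ₁ + m (ρ - 2b)
    have hδ : δ₁ ≤ φ r (2*b) := hmin₁ hr
    have hc1 : c ≤ δ₁ / (1 + 2*b) := le_trans (min_le_left _ _) (min_le_left _ _)
    have hc2 : c ≤ m := le_trans (min_le_left _ _) (min_le_right _ _)
    have h1 : c * (1 + 2*b) ≤ δ₁ := by
      rw [le_div_iff₀ (by linarith : (0:ℝ) < 1 + 2*b)] at hc1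
      linarith
    have h2 : c * (ρ - 2*b) ≤ m * (ρ - 2*b) := by nlinarith
    have : c * (1 + ρ) = c * (1 + 2*b) + c * (ρ - 2*b) := by ring
    simp only at hkey
    linarith
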